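/- Fix 1/2 < H < 1 and t > 0, and let f : (0, t] → ℝ^m be continuous and bounded. If for every s ∈ (0, t) one has ∫_s^t (u − s)^{H − 3/2} u^{H − 1/2} f(u) du = 0 (these improper integrals being absolutely convergent since H − 3/2 > −1), then f(u) = 0 for every u ∈ (0, t]. -/

import Mathlib

open MeasureTheory Set intervalIntegral Topology Filter

namespace VolterraAux


lemma ker_intervalIntegrable {a : ℝ} (ha : -1 < a) (s b : ℝ) :
    IntervalIntegrable (fun u => (u - s) ^ a) volume s b := by
  simpa using
    (intervalIntegral.intervalIntegrable_rpow' (a := (0:ℝ)) (b := b - s) ha).comp_sub_right s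

lemma ker_integrableOn {a : ℝ} (ha : -1 < a) (s b : ℝ) :
    IntegrableOn (fun u => (u - s) ^ a) (Ioo s b) := by
  rcases le_or_gt s b with h | h
  · exact ((ker_intervalIntegrable ha s b).1).mono_set Ioo_subset_Ioc_self
  · rw [Set.Ioo_eq_empty (by linarith)]
    exact integrableOn_empty

lemma ker2_integrableOn {a : ℝ} (ha : -1 < a) (u b : ℝ) :
    IntegrableOn (fun s => (u - s) ^ a) (Ioo b u) := by
  rcases le_or_gt b u with h | h
  · have h2 : IntervalIntegrable (fun s => (u - s) ^ a) volume b u := by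
      simpa using
        (intervalIntegral.intervalIntegrable_rpow' (a := u - b) (b := (0:ℝ)) ha).comp_sub_left u
    exact h2.1.mono_set Ioo_subset_Ioc_self
  · rw [Set.Ioo_eq_empty (by linarith)]
    exact integrableOn_empty

lemma ker_mul_integrableOn {a : ℝ} (ha : -1 < a) {s b C : ℝ} {g : ℝ → ℝ}
    (hg : AEStronglyMeasurable g (volume.restrict (Ioo s b)))
    (hgb : ∀ᵐ u ∂(volume.restrict (Ioo s b)), ‖g u‖ ≤ C) :
    IntegrableOn (fun u => (u - s) ^ a * g u) (Ioo s b) := by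
  have h := (ker_integrableOn ha s b)
  have h2 := MeasureTheory.Integrable.bdd_mul (c := C) h hg hgb
  exact h2.congr (Filter.Eventually.of_forall fun x => mul_comm _ _)

lemma ker_integral {a : ℝ} (h0 : 0 < a) {s b : ℝ} (hsb : s ≤ b) :
    ∫ u in Ioo s b, (u - s) ^ (a - 1) = (b - s) ^ a / a := by
  rw [← MeasureTheory.integral_Ioc_eq_integral_Ioo, ← intervalIntegral.integral_of_le hsb]
  have := intervalIntegral.integral_comp_sub_right (a := s) (b := b)
    (fun x => x ^ (a - 1)) s
  rw [this]
  rw [integral_rpow (Or.inl (by linarith))]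
  simp [sub_add_cancel, Real.zero_rpow (ne_of_gt h0), sub_self]


lemma beta_integrableOn {a r u : ℝ} (h0 : 0 < a) (h1 : a < 1) (hru : r < u) :
    IntegrableOn (fun s => (s - r) ^ (-a) * (u - s) ^ (a - 1)) (Ioo r u) := by
  set m1 : ℝ := r + (u - r) / 3 with hm1
  set m2 : ℝ := r + 2 * (u - r) / 3 with hm2
  have hrm1 : r < m1 := by rw [hm1]; linarith
  have hm1m2 : m1 < m2 := by rw [hm1, hm2]; linarith
  have hm2u : m2 < u := by rw [hm2]; linarith
  have hsplit : Ioo r m2 ∪ Ioo m1 u = Ioo r u := by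
    rw [Set.Ioo_union_Ioo' hm1m2 (by linarith)]
    rw [min_eq_left (by linarith), max_eq_right (by linarith)]
  rw [← hsplit]
  refine MeasureTheory.IntegrableOn.union ?_ ?_
  · -- on Ioo r m2 : (s - r)^(-a) integrable, (u - s)^(a-1) bounded
    have hker := ker_integrableOn (a := -a) (by linarith) r m2
    have hmeas : AEStronglyMeasurable (fun s => (u - s) ^ (a - 1))
        (volume.restrict (Ioo r m2)) :=
      ((measurable_const.sub measurable_id).pow_const (a - 1)).aestronglyMeasurable
    have hbd : ∀ᵐ s ∂(volume.restrict (Ioo r m2)),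
        ‖(u - s) ^ (a - 1)‖ ≤ (u - m2) ^ (a - 1) := by
      refine (ae_restrict_iff' measurableSet_Ioo).2 (Filter.Eventually.of_forall fun s hs => ?_)
      rw [Real.norm_eq_abs, abs_of_nonneg (Real.rpow_nonneg (by linarith [hs.2]) _)]
      exact Real.rpow_le_rpow_of_nonpos (by linarith) (by linarith [hs.2]) (by linarith)
    exact (MeasureTheory.Integrable.bdd_mul hker hmeas hbd).congr
      (Filter.Eventually.of_forall fun x => mul_comm _ _)
  · -- on Ioo m1 u : (u - s)^(a-1) integrable, (s - r)^(-a) bounded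
    have hker := ker2_integrableOn (a := a - 1) (by linarith) u m1
    have hmeas : AEStronglyMeasurable (fun s => (s - r) ^ (-a))
        (volume.restrict (Ioo m1 u)) :=
      ((measurable_id.sub measurable_const).pow_const (-a)).aestronglyMeasurable
    have hbd : ∀ᵐ s ∂(volume.restrict (Ioo m1 u)),
        ‖(s - r) ^ (-a)‖ ≤ (m1 - r) ^ (-a) := by
      refine (ae_restrict_iff' measurableSet_Ioo).2 (Filter.Eventually.of_forall fun s hs => ?_)
      rw [Real.norm_eq_abs, abs_of_nonneg (Real.rpow_nonneg (by linarith [hs.1]) _)]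
      exact Real.rpow_le_rpow_of_nonpos (by linarith) (by linarith [hs.1]) (by linarith)
    exact MeasureTheory.Integrable.bdd_mul hker hmeas hbd

lemma beta_intervalIntegrable {a r u : ℝ} (h0 : 0 < a) (h1 : a < 1) (hru : r < u) :
    IntervalIntegrable (fun s => (s - r) ^ (-a) * (u - s) ^ (a - 1)) volume r u := by
  rw [intervalIntegrable_iff_integrableOn_Ioo_of_le hru.le]
  exact beta_integrableOn h0 h1 hru

lemma beta_eq {a r u : ℝ} (h0 : 0 < a) (h1 : a < 1) (hru : r < u) :
    (∫ s in r..u, (s - r) ^ (-a) * (u - s) ^ (a - 1)) =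
      ∫ x in (0:ℝ)..1, x ^ (-a) * (1 - x) ^ (a - 1) := by
  set d : ℝ := u - r with hd
  have hd0 : 0 < d := by rw [hd]; linarith
  -- step A : translate
  have stepA : (∫ s in r..u, (s - r) ^ (-a) * (u - s) ^ (a - 1)) =
      ∫ y in (0:ℝ)..d, y ^ (-a) * (d - y) ^ (a - 1) := by
    have := intervalIntegral.integral_comp_add_right (a := (0:ℝ)) (b := d)
      (fun s => (s - r) ^ (-a) * (u - s) ^ (a - 1)) r
    rw [zero_add] at this
    have hdr : d + r = u := by rw [hd]; ring
    rw [hdr] at this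
    rw [← this]
    refine intervalIntegral.integral_congr fun y _ => ?_
    have h1' : y + r - r = y := by ring
    have h2' : u - (y + r) = d - y := by rw [hd]; ring
    rw [h1', h2']
  -- step B : rescale
  have stepB : (∫ y in (0:ℝ)..d, y ^ (-a) * (d - y) ^ (a - 1)) =
      ∫ x in (0:ℝ)..1, x ^ (-a) * (1 - x) ^ (a - 1) := by
    have hmul := intervalIntegral.integral_comp_mul_right (a := (0:ℝ)) (b := 1)
      (fun y => y ^ (-a) * (d - y) ^ (a - 1)) (ne_of_gt hd0)
    rw [zero_mul, one_mul] at hmul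
    -- hmul : ∫ x in 0..1, f (x * d) = d⁻¹ • ∫ y in 0..d, f y
    have hcongr : (∫ x in (0:ℝ)..1, (x * d) ^ (-a) * (d - x * d) ^ (a - 1)) =
        ∫ x in (0:ℝ)..1, d⁻¹ * (x ^ (-a) * (1 - x) ^ (a - 1)) := by
      refine intervalIntegral.integral_congr fun x hx => ?_
      rw [Set.uIcc_of_le (by norm_num : (0:ℝ) ≤ 1)] at hx
      have hx0 : 0 ≤ x := hx.1
      have hx1 : x ≤ 1 := hx.2
      have e1 : (x * d) ^ (-a) = x ^ (-a) * d ^ (-a) :=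
        Real.mul_rpow hx0 hd0.le
      have e2 : (d - x * d) ^ (a - 1) = d ^ (a - 1) * (1 - x) ^ (a - 1) := by
        have : d - x * d = d * (1 - x) := by ring
        rw [this, Real.mul_rpow hd0.le (by linarith)]
      rw [e1, e2]
      have e3 : d ^ (-a) * d ^ (a - 1) = d⁻¹ := by
        have hε : -a + (a - 1) = -1 := by ring
        rw [← Real.rpow_add hd0, hε, Real.rpow_neg_one]
      calc x ^ (-a) * d ^ (-a) * (d ^ (a - 1) * (1 - x) ^ (a - 1))
          = (d ^ (-a) * d ^ (a - 1)) * (x ^ (-a) * (1 - x) ^ (a - 1)) := by ring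
        _ = d⁻¹ * (x ^ (-a) * (1 - x) ^ (a - 1)) := by rw [e3]
    rw [hcongr] at hmul
    rw [intervalIntegral.integral_const_mul] at hmul
    -- hmul : d⁻¹ * ∫ x in 0..1, I01 = d⁻¹ • ∫ y in 0..d, f
    have := hmul
    rw [smul_eq_mul] at this
    have hd' : d⁻¹ ≠ 0 := inv_ne_zero (ne_of_gt hd0)
    field_simp at this
    linarith [this]
  rw [stepA, stepB]

lemma beta_pos {a : ℝ} (h0 : 0 < a) (h1 : a < 1) :
    0 < ∫ x in (0:ℝ)..1, x ^ (-a) * (1 - x) ^ (a - 1) := by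
  have hint : IntervalIntegrable (fun x => x ^ (-a) * (1 - x) ^ (a - 1)) volume 0 1 := by
    have := beta_intervalIntegrable h0 h1 (by norm_num : (0:ℝ) < 1)
    simpa using this
  refine intervalIntegral.intervalIntegral_pos_of_pos_on hint (fun x hx => ?_) (by norm_num)
  exact mul_pos (Real.rpow_pos_of_pos hx.1 _) (Real.rpow_pos_of_pos (by linarith [hx.2]) _)


lemma fubini_zero {a r t : ℝ} (h0 : 0 < a) (h1 : a < 1) (hr0 : 0 ≤ r) (hrt : r < t)
    {C : ℝ} (hC : 0 ≤ C) {g : ℝ → ℝ}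
    (hg : AEStronglyMeasurable g volume) (hgb : ∀ u, ‖g u‖ ≤ C)
    (hz : ∀ s ∈ Ioo r t, (∫ u in Ioo s t, (u - s) ^ (a - 1) * g u) = 0) :
    (∫ u in Ioo r t, g u) = 0 := by
  set μ : Measure ℝ := volume.restrict (Ioo r t) with hμ
  set K : ℝ → ℝ → ℝ := fun s u => (s - r) ^ (-a) * ((u - s) ^ (a - 1) * g u) with hK
  set F : ℝ × ℝ → ℝ :=
    fun p => ({q : ℝ × ℝ | q.1 < q.2}).indicator (fun q => K q.1 q.2) p with hF
  have ha1 : (-1:ℝ) < a - 1 := by linarith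
  have ha2 : (-1:ℝ) < -a := by linarith
  -- measurability
  have hKmeas : AEStronglyMeasurable (fun q : ℝ × ℝ => K q.1 q.2) (μ.prod μ) := by
    have h1 : Measurable fun q : ℝ × ℝ => (q.1 - r) ^ (-a) :=
      (measurable_fst.sub measurable_const).pow_const (-a)
    have h2 : Measurable fun q : ℝ × ℝ => (q.2 - q.1) ^ (a - 1) :=
      (measurable_snd.sub measurable_fst).pow_const (a - 1)
    have h3 : AEStronglyMeasurable (fun q : ℝ × ℝ => g q.2) (μ.prod μ) := by
      have := (hg.restrict (s := Ioo r t)).comp_quasiMeasurePreserving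
        (Measure.quasiMeasurePreserving_snd (μ := μ) (ν := μ))
      exact this
    exact h1.aestronglyMeasurable.mul (h2.aestronglyMeasurable.mul h3)
  have hSmeas : MeasurableSet {q : ℝ × ℝ | q.1 < q.2} :=
    measurableSet_lt measurable_fst measurable_snd
  have hFmeas : AEStronglyMeasurable F (μ.prod μ) := hKmeas.indicator hSmeas
  -- slice description
  have hslice : ∀ s : ℝ, (fun u => F (s, u)) = (Ioi s).indicator (fun u => K s u) := by
    intro s; funext u
    by_cases h : s < u <;> simp [hF, Set.indicator_apply, h, Set.mem_Ioi]
  have hslice2 : ∀ u : ℝ, (fun s => F (s, u)) = (Iio u).indicator (fun s => K s u) := by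
    intro u; funext s
    by_cases h : s < u <;> simp [hF, Set.indicator_apply, h, Set.mem_Iio]
  have hrestr : ∀ s ∈ Ioo r t, μ.restrict (Ioi s) = volume.restrict (Ioo s t) := by
    intro s hs
    rw [hμ, Measure.restrict_restrict measurableSet_Ioi]
    congr 1
    ext x
    simp only [mem_inter_iff, mem_Ioi, mem_Ioo]
    constructor
    · rintro ⟨h1, _, h3⟩; exact ⟨h1, h3⟩
    · rintro ⟨h1, h2⟩; exact ⟨h1, lt_trans hs.1 h1, h2⟩
  have hrestr2 : ∀ u ∈ Ioo r t, μ.restrict (Iio u) = volume.restrict (Ioo r u) := by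
    intro u hu
    rw [hμ, Measure.restrict_restrict measurableSet_Iio]
    congr 1
    ext x
    simp only [mem_inter_iff, mem_Iio, mem_Ioo]
    constructor
    · rintro ⟨h1, h2, _⟩; exact ⟨h2, h1⟩
    · rintro ⟨h1, h2⟩; exact ⟨h2, h1, lt_trans h2 hu.2⟩
  -- slice integrability
  have hsliceInt : ∀ s ∈ Ioo r t, Integrable (fun u => F (s, u)) μ := by
    intro s hs
    rw [hslice s, integrable_indicator_iff measurableSet_Ioi]
    have hker : IntegrableOn (fun u => (u - s) ^ (a - 1) * g u) (Ioo s t) :=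
      ker_mul_integrableOn ha1 hg.restrict
        (Filter.Eventually.of_forall fun u => hgb u)
    have : IntegrableOn (fun u => K s u) (Ioo s t) := by
      exact hker.const_mul ((s - r) ^ (-a))
    rw [IntegrableOn, hrestr s hs]
    exact this
  -- norm bound for second Fubini condition
  set D : ℝ := C * (t ^ a / a) with hD
  have hDnn : 0 ≤ D := by
    apply mul_nonneg hC
    exact div_nonneg (Real.rpow_nonneg (by linarith) _) h0.le
  have hnormbd : ∀ s ∈ Ioo r t, (∫ u, ‖F (s, u)‖ ∂μ) ≤ D * (s - r) ^ (-a) := by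
    intro s hs
    have hptw : ∀ u, ‖F (s, u)‖ = (Ioi s).indicator (fun u => ‖K s u‖) u := by
      intro u
      rw [congrFun (hslice s) u, norm_indicator_eq_indicator_norm]
    have hIoo : (∫ u, ‖F (s, u)‖ ∂μ) = ∫ u in Ioo s t, ‖K s u‖ := by
      simp only [hptw]
      rw [MeasureTheory.integral_indicator measurableSet_Ioi, hrestr s hs]
    rw [hIoo]
    have hker : IntegrableOn (fun u => (u - s) ^ (a - 1) * g u) (Ioo s t) :=
      ker_mul_integrableOn ha1 hg.restrict (Filter.Eventually.of_forall fun u => hgb u)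
    have hmaj : IntegrableOn (fun u => (s - r) ^ (-a) * (C * (u - s) ^ (a - 1))) (Ioo s t) := by
      have := (ker_integrableOn ha1 s t).const_mul ((s - r) ^ (-a) * C)
      refine this.congr (Filter.Eventually.of_forall fun u => ?_)
      ring
    have hKint : IntegrableOn (fun u => ‖K s u‖) (Ioo s t) := by
      have : IntegrableOn (fun u => K s u) (Ioo s t) := by
        exact hker.const_mul ((s - r) ^ (-a))
      exact this.norm
    have hmono : (∫ u in Ioo s t, ‖K s u‖) ≤
        ∫ u in Ioo s t, (s - r) ^ (-a) * (C * (u - s) ^ (a - 1)) := by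
      refine setIntegral_mono_on hKint hmaj measurableSet_Ioo fun u hu => ?_
      have hsr : (0:ℝ) ≤ s - r := by linarith [hs.1]
      have hus : (0:ℝ) ≤ u - s := by linarith [hu.1]
      rw [hK]
      rw [norm_mul, norm_mul]
      rw [Real.norm_eq_abs ((s - r) ^ (-a)), abs_of_nonneg (Real.rpow_nonneg hsr _)]
      rw [Real.norm_eq_abs ((u - s) ^ (a - 1)), abs_of_nonneg (Real.rpow_nonneg hus _)]
      refine mul_le_mul_of_nonneg_left ?_ (Real.rpow_nonneg hsr _)
      rw [mul_comm C _]
      exact mul_le_mul_of_nonneg_left (hgb u) (Real.rpow_nonneg hus _)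
    refine le_trans hmono ?_
    rw [MeasureTheory.integral_const_mul, MeasureTheory.integral_const_mul, ker_integral h0 (by linarith [hs.2] : s ≤ t)]
    have h1' : (t - s) ^ a / a ≤ t ^ a / a :=
      (div_le_div_iff_of_pos_right h0).2
        (Real.rpow_le_rpow (by linarith [hs.2]) (by linarith [hs.1]) h0.le)
    calc (s - r) ^ (-a) * (C * ((t - s) ^ a / a)) ≤ (s - r) ^ (-a) * (C * (t ^ a / a)) := by
          refine mul_le_mul_of_nonneg_left ?_ (Real.rpow_nonneg (by linarith [hs.1]) _)
          exact mul_le_mul_of_nonneg_left h1' hC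
      _ = D * (s - r) ^ (-a) := by rw [hD]; ring
  -- product integrability
  have hFint : Integrable F (μ.prod μ) := by
    rw [MeasureTheory.integrable_prod_iff hFmeas]
    constructor
    · refine (ae_restrict_iff' measurableSet_Ioo).2 (Filter.Eventually.of_forall ?_)
      exact hsliceInt
    · have hmajint : Integrable (fun s => D * (s - r) ^ (-a)) μ :=
        (ker_integrableOn ha2 r t).const_mul D
      refine hmajint.mono' (hFmeas.norm.integral_prod_right') ?_
      refine (ae_restrict_iff' measurableSet_Ioo).2 (Filter.Eventually.of_forall fun s hs => ?_)
      have hnn : 0 ≤ ∫ u, ‖F (s, u)‖ ∂μ := integral_nonneg fun u => norm_nonneg _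
      rw [Real.norm_eq_abs, abs_of_nonneg hnn]
      exact hnormbd s hs
  -- swap
  have hswap : (∫ s, ∫ u, F (s, u) ∂μ ∂μ) = ∫ u, ∫ s, F (s, u) ∂μ ∂μ :=
    MeasureTheory.integral_integral_swap hFint
  -- LHS is zero
  have hLHS : (∫ s, ∫ u, F (s, u) ∂μ ∂μ) = 0 := by
    have : ∀ s ∈ Ioo r t, (∫ u, F (s, u) ∂μ) = 0 := by
      intro s hs
      rw [hslice s, MeasureTheory.integral_indicator measurableSet_Ioi, hrestr s hs]
      have : (∫ u in Ioo s t, K s u) =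
          (s - r) ^ (-a) * ∫ u in Ioo s t, (u - s) ^ (a - 1) * g u := by
        rw [hK, MeasureTheory.integral_const_mul]
      rw [this, hz s hs, mul_zero]
    rw [hμ]
    rw [MeasureTheory.setIntegral_congr_fun measurableSet_Ioo
      (fun s hs => this s hs)]
    simp
  -- RHS computation
  set c : ℝ := ∫ x in (0:ℝ)..1, x ^ (-a) * (1 - x) ^ (a - 1) with hc
  have hRHS : (∫ u, ∫ s, F (s, u) ∂μ ∂μ) = c * ∫ u in Ioo r t, g u := by
    have hinner : ∀ u ∈ Ioo r t, (∫ s, F (s, u) ∂μ) = c * g u := by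
      intro u hu
      rw [hslice2 u, MeasureTheory.integral_indicator measurableSet_Iio, hrestr2 u hu]
      have h1' : (∫ s in Ioo r u, K s u) =
          (∫ s in Ioo r u, (s - r) ^ (-a) * (u - s) ^ (a - 1)) * g u := by
        rw [← MeasureTheory.integral_mul_const]
        refine setIntegral_congr_fun measurableSet_Ioo fun s hs => ?_
        rw [hK]; ring
      rw [h1']
      congr 1
      rw [← MeasureTheory.integral_Ioc_eq_integral_Ioo,
        ← intervalIntegral.integral_of_le hu.1.le]
      exact beta_eq h0 h1 hu.1
    rw [hμ, MeasureTheory.setIntegral_congr_fun measurableSet_Ioo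
      (fun u hu => hinner u hu)]
    rw [MeasureTheory.integral_const_mul]
  rw [hLHS] at hswap
  rw [hRHS] at hswap
  have hcpos : 0 < c := beta_pos h0 h1
  have := hswap.symm
  rcases mul_eq_zero.1 this with h | h
  · exact absurd h (ne_of_gt hcpos)
  · exact h


end VolterraAux

open VolterraAux

/-- **Injectivity of the Volterra-kernel transform associated with fractional Brownian motion
(`1/2 < H < 1`).** If `f : (0, t] → ℝ^m` is continuous and bounded and
`∫ₛᵗ (u − s)^{H − 3/2} u^{H − 1/2} f u du = 0` for every `s ∈ (0, t)`, then `f ≡ 0` on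
`(0, t]`. -/
theorem volterra_kernel_transform_injective {m : ℕ}
    (H : ℝ) (hH1 : 1 / 2 < H) (hH2 : H < 1)
    (t : ℝ) (ht : 0 < t)
    (f : ℝ → Fin m → ℝ)
    (hfc : ContinuousOn f (Set.Ioc 0 t))
    (hfb : ∃ C : ℝ, ∀ u ∈ Set.Ioc (0 : ℝ) t, ‖f u‖ ≤ C)
    (hint : ∀ s ∈ Set.Ioo (0 : ℝ) t,
      (∫ u in s..t, ((u - s) ^ (H - 3 / 2) * u ^ (H - 1 / 2)) • f u) = 0) :
    ∀ u ∈ Set.Ioc (0 : ℝ) t, f u = 0 := by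
  obtain ⟨C, hC⟩ := hfb
  have hC0 : 0 ≤ C := le_trans (norm_nonneg (f t)) (hC t ⟨ht, le_refl t⟩)
  set a : ℝ := H - 1 / 2 with ha
  have ha0 : 0 < a := by rw [ha]; linarith
  have ha1 : a < 1 := by rw [ha]; linarith
  have hae : H - 3 / 2 = a - 1 := by rw [ha]; ring
  -- main claim : each component vanishes on (0, t)
  have main : ∀ i : Fin m, ∀ u ∈ Ioo (0:ℝ) t, f u i = 0 := by
    intro i
    set g : ℝ → ℝ := (Ioc 0 t).indicator (fun u => u ^ a * f u i) with hg
    have hficont : ContinuousOn (fun u => u ^ a * f u i) (Ioc 0 t) := by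
      apply ContinuousOn.mul
      · intro x hx
        exact (Real.continuousAt_rpow_const x a (Or.inl (ne_of_gt hx.1))).continuousWithinAt
      · exact (continuous_apply i).comp_continuousOn hfc
    have hgmeas : AEStronglyMeasurable g volume :=
      (aestronglyMeasurable_indicator_iff measurableSet_Ioc).2
        (hficont.aestronglyMeasurable measurableSet_Ioc)
    set C' : ℝ := t ^ a * C with hC'
    have hC'0 : 0 ≤ C' := mul_nonneg (Real.rpow_nonneg ht.le _) hC0
    have hgb : ∀ u, ‖g u‖ ≤ C' := by
      intro u
      by_cases hu : u ∈ Ioc 0 t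
      · rw [hg, indicator_of_mem hu, Real.norm_eq_abs, abs_mul,
          abs_of_nonneg (Real.rpow_nonneg hu.1.le _)]
        have h1 : u ^ a ≤ t ^ a := Real.rpow_le_rpow hu.1.le hu.2 ha0.le
        have h2 : |f u i| ≤ C := by
          calc |f u i| = ‖f u i‖ := (Real.norm_eq_abs _).symm
            _ ≤ ‖f u‖ := norm_le_pi_norm (f u) i
            _ ≤ C := hC u hu
        calc u ^ a * |f u i| ≤ t ^ a * C :=
              mul_le_mul h1 h2 (abs_nonneg _) (Real.rpow_nonneg ht.le _)
          _ = C' := hC'.symm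
      · rw [hg, indicator_of_notMem hu]
        simpa using hC'0
    -- the transformed integrals vanish
    have hz : ∀ s ∈ Ioo (0:ℝ) t, (∫ u in Ioo s t, (u - s) ^ (a - 1) * g u) = 0 := by
      intro s hs
      have hsub : Ioo s t ⊆ Ioc 0 t := fun x hx => ⟨lt_trans hs.1 hx.1, hx.2.le⟩
      have hfmeas : AEStronglyMeasurable f (volume.restrict (Ioo s t)) :=
        (hfc.mono hsub).aestronglyMeasurable measurableSet_Ioo
      have hmem : MemLp f ⊤ (volume.restrict (Ioo s t)) :=
        memLp_top_of_bound hfmeas C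
          ((ae_restrict_iff' measurableSet_Ioo).2
            (Filter.Eventually.of_forall fun u hu => hC u (hsub hu)))
      -- scalar kernel integrable on Ioo s t
      have hkint : IntegrableOn (fun u => (u - s) ^ (a - 1) * u ^ a) (Ioo s t) := by
        refine ker_mul_integrableOn (C := t ^ a) (by linarith) ?_ ?_
        · exact (measurable_id.pow_const a).aestronglyMeasurable
        · refine (ae_restrict_iff' measurableSet_Ioo).2
            (Filter.Eventually.of_forall fun u hu => ?_)
          rw [Real.norm_eq_abs, abs_of_nonneg (Real.rpow_nonneg (by linarith [hs.1, hu.1]) _)]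
          exact Real.rpow_le_rpow (by linarith [hs.1, hu.1]) hu.2.le ha0.le
      have hII : IntegrableOn (fun u => ((u - s) ^ (H - 3/2) * u ^ (H - 1/2)) • f u)
          (Ioo s t) := by
        have := hkint.smul_of_top_left hmem
        refine this.congr (Filter.Eventually.of_forall fun u => ?_)
        simp only [Pi.smul_apply', hae, ha]
      have hII' : IntervalIntegrable
          (fun u => ((u - s) ^ (H - 3/2) * u ^ (H - 1/2)) • f u) volume s t := by
        rw [intervalIntegrable_iff_integrableOn_Ioo_of_le hs.2.le]
        exact hII
      -- apply the i-th coordinate projection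
      have happ := (ContinuousLinearMap.proj (R := ℝ) (φ := fun _ : Fin m => ℝ) i
        ).intervalIntegral_comp_comm hII'
      rw [hint s hs] at happ
      simp only [ContinuousLinearMap.proj_apply, Pi.smul_apply, smul_eq_mul,
        ContinuousLinearMap.zero_apply, map_zero] at happ
      -- happ : ∫ u in s..t, ((u - s) ^ (H - 3/2) * u ^ (H - 1/2)) * f u i = 0
      rw [intervalIntegral.integral_of_le hs.2.le,
        MeasureTheory.integral_Ioc_eq_integral_Ioo] at happ
      rw [← happ]
      refine setIntegral_congr_fun measurableSet_Ioo fun u hu => ?_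
      have hu' : u ∈ Ioc 0 t := ⟨lt_trans hs.1 hu.1, hu.2.le⟩
      rw [hg, indicator_of_mem hu', hae]
      ring
    -- apply the Fubini lemma for every r and conclude by differentiation
    have hint0 : ∀ r ∈ Ioo (0:ℝ) t, (∫ u in Ioo r t, g u) = 0 := by
      intro r hr
      exact fubini_zero ha0 ha1 hr.1.le hr.2 hC'0 hgmeas hgb
        (fun s hs => hz s ⟨lt_trans hr.1 hs.1, hs.2⟩)
    -- g is interval integrable on any interval
    have hgint : ∀ x y : ℝ, IntervalIntegrable g volume x y := by
      intro x y
      rw [intervalIntegrable_iff]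
      refine Measure.integrableOn_of_bounded ?_ hgmeas (Filter.Eventually.of_forall hgb)
      rw [Set.uIoc]
      exact ne_of_lt measure_Ioc_lt_top
    -- integral of g over subintervals of (0, t) vanishes
    have key2 : ∀ x y : ℝ, x ∈ Ioo (0:ℝ) t → y ∈ Ioo (0:ℝ) t →
        (∫ z in x..y, g z) = 0 := by
      have base : ∀ x y : ℝ, x ∈ Ioo (0:ℝ) t → y ∈ Ioo (0:ℝ) t → x ≤ y →
          (∫ z in x..y, g z) = 0 := by
        intro x y hx hy hxy
        have hdisj : Disjoint (Ioc x y) (Ioo y t) := by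
          rw [Set.disjoint_left]
          intro z hz hz'
          exact absurd hz.2 (not_le.2 hz'.1)
        have hunion : Ioc x y ∪ Ioo y t = Ioo x t :=
          Set.Ioc_union_Ioo_eq_Ioo hxy hy.2
        have h1 : (∫ z in Ioc x y, g z) + (∫ z in Ioo y t, g z) = ∫ z in Ioo x t, g z := by
          rw [← MeasureTheory.setIntegral_union hdisj measurableSet_Ioo
            ((hgint x y).1) ?_, hunion]
          · exact ((hgint y t).1).mono_set Ioo_subset_Ioc_self
        rw [hint0 x hx, hint0 y hy] at h1
        rw [intervalIntegral.integral_of_le hxy]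
        linarith [h1]
      intro x y hx hy
      rcases le_total x y with h | h
      · exact base x y hx hy h
      · rw [intervalIntegral.integral_symm, base y x hy hx h, neg_zero]
    -- differentiate at a point
    intro u hu
    have hgcont : ContinuousOn g (Ioo 0 t) := by
      refine (hficont.mono Ioo_subset_Ioc_self).congr fun x hx => ?_
      rw [hg, indicator_of_mem (Ioo_subset_Ioc_self hx)]
    set x0 : ℝ := u / 2 with hx0
    have hx0mem : x0 ∈ Ioo (0:ℝ) t := ⟨by rw [hx0]; linarith [hu.1], by rw [hx0]; linarith [hu.1, hu.2]⟩
    have hsm : StronglyMeasurableAtFilter g (nhds u) volume :=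
      ⟨Ioo 0 t, isOpen_Ioo.mem_nhds hu, hgmeas.restrict⟩
    have hderiv : HasDerivAt (fun y => ∫ z in x0..y, g z) (g u) u :=
      intervalIntegral.integral_hasDerivAt_right (hgint x0 u) hsm
        (hgcont.continuousAt (isOpen_Ioo.mem_nhds hu))
    have heq : (fun y => ∫ z in x0..y, g z) =ᶠ[nhds u] fun _ => (0:ℝ) :=
      Filter.eventually_of_mem (isOpen_Ioo.mem_nhds hu) fun y hy => key2 x0 y hx0mem hy
    have hzero : HasDerivAt (fun y => ∫ z in x0..y, g z) 0 u :=
      (hasDerivAt_const u (0:ℝ)).congr_of_eventuallyEq heq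
    have hgu : g u = 0 := hderiv.unique hzero
    rw [hg, indicator_of_mem (Ioo_subset_Ioc_self hu)] at hgu
    have hupos : (0:ℝ) < u ^ a := Real.rpow_pos_of_pos hu.1 _
    rcases mul_eq_zero.1 hgu with h | h
    · exact absurd h (ne_of_gt hupos)
    · exact h
  -- conclude on Ioo, then at the endpoint t
  have hIoo : ∀ u ∈ Ioo (0:ℝ) t, f u = 0 := fun u hu => funext fun i => main i u hu
  have hft : f t = 0 := by
    have hne : (𝓝[Ioo (0:ℝ) t] t).NeBot := by
      rw [← mem_closure_iff_nhdsWithin_neBot, closure_Ioo (ne_of_lt ht)]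
      exact ⟨ht.le, le_refl t⟩
    have h1 : Filter.Tendsto f (𝓝[Ioo (0:ℝ) t] t) (nhds (f t)) := by
      have := (hfc t ⟨ht, le_refl t⟩).tendsto
      exact this.mono_left (nhdsWithin_mono t Ioo_subset_Ioc_self)
    have h2 : Filter.Tendsto f (𝓝[Ioo (0:ℝ) t] t) (nhds 0) := by
      refine Filter.Tendsto.congr' ?_ tendsto_const_nhds
      exact Filter.eventually_of_mem self_mem_nhdsWithin fun u hu => (hIoo u hu).symm
    exact tendsto_nhds_unique h1 h2
  intro u hu
  rcases eq_or_lt_of_le hu.2 with h | h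
  · rw [h]; exact hft
  · exact hIoo u ⟨hu.1, h⟩
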